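/- Let C be a precategory (category). For (f, g) ∈ U_C(X) (so f : X ⟶ Y, g : Z ⟶ Y), (f', g) ∈ Ũ_C(X') (so f' : X' ⟶ Z) and u : X' ⟶ X such that u ≫ f = f' ≫ g, the commutative square in the category of presheaves of sets on C with top arrow ṽ(f', g) : Yo(X') ⟶ Ũ_C, left arrow Yo(u), right arrow p_C : Ũ_C ⟶ U_C and bottom arrow v(f, g) : Yo(X) ⟶ U_C is a pullback square if and only if the square in C with top arrow f' : X' ⟶ Z, left arrow u : X' ⟶ X, right arrow g : Z ⟶ Y and bottom arrow f : X ⟶ Y is a pullback square. -/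

import Mathlib

open CategoryTheory Limits Opposite

universe u

variable (C : Type u) [SmallCategory C]

/-- The presheaf `U_C` with `U_C(X) = {(f, g) : f : X ⟶ Y, g : Z ⟶ Y}`,
encoded as `⟨Y, Z, f, g⟩`, with restriction `(f, g) ↦ (a ≫ f, g)`. -/
def UPsh : Cᵒᵖ ⥤ Type u where
  obj X := Σ (Y : C) (Z : C), (unop X ⟶ Y) × (Z ⟶ Y)
  map a := TypeCat.ofHom fun s => ⟨s.1, s.2.1, a.unop ≫ s.2.2.1, s.2.2.2⟩
  map_id := by intro X; refine ConcreteCategory.hom_ext _ _ fun s => ?_; simp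
  map_comp := by intro X Y Z a b; refine ConcreteCategory.hom_ext _ _ fun s => ?_; simp

/-- The presheaf `Ũ_C` with `Ũ_C(X) = {(f', g) : f' : X ⟶ Z, g : Z ⟶ Y}`,
encoded as `⟨Z, Y, f', g⟩`, with restriction `(f', g) ↦ (a ≫ f', g)`. -/
def UtildePsh : Cᵒᵖ ⥤ Type u where
  obj X := Σ (Z : C) (Y : C), (unop X ⟶ Z) × (Z ⟶ Y)
  map a := TypeCat.ofHom fun s => ⟨s.1, s.2.1, a.unop ≫ s.2.2.1, s.2.2.2⟩
  map_id := by intro X; refine ConcreteCategory.hom_ext _ _ fun s => ?_; simp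
  map_comp := by intro X Y Z a b; refine ConcreteCategory.hom_ext _ _ fun s => ?_; simp

/-- The morphism of presheaves `p_C : Ũ_C ⟶ U_C`, `(f', g) ↦ (f' ≫ g, g)`. -/
def pPsh : UtildePsh C ⟶ UPsh C where
  app X := TypeCat.ofHom fun s => ⟨s.2.1, s.1, s.2.2.1 ≫ s.2.2.2, s.2.2.2⟩
  naturality := by
    intro X Y a; refine ConcreteCategory.hom_ext _ _ fun s => ?_
    show (⟨s.2.1, s.1, (a.unop ≫ s.2.2.1) ≫ s.2.2.2, s.2.2.2⟩ : (UPsh C).obj Y) =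
      ⟨s.2.1, s.1, a.unop ≫ s.2.2.1 ≫ s.2.2.2, s.2.2.2⟩
    rw [Category.assoc]

variable {C}

lemma sig_ext {W Y Z : C} {a b : W ⟶ Y} {c d : Z ⟶ Y}
    (h : (⟨Y, Z, a, c⟩ : Σ Y Z : C, (W ⟶ Y) × (Z ⟶ Y)) = ⟨Y, Z, b, d⟩) : a = b ∧ c = d := by
  simpa using h

lemma utilde_ext {W : Cᵒᵖ} {Y Z : C} {a b : unop W ⟶ Z} {c d : Z ⟶ Y}
    (h : (⟨Z, Y, a, c⟩ : (UtildePsh C).obj W) = ⟨Z, Y, b, d⟩) : a = b ∧ c = d := by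
  have h' : (⟨Z, Y, a, c⟩ : Σ Z Y : C, (unop W ⟶ Z) × (Z ⟶ Y)) = ⟨Z, Y, b, d⟩ := h
  simpa using h'

lemma u_ext {W : Cᵒᵖ} {Y Z : C} {a b : unop W ⟶ Y} {c d : Z ⟶ Y}
    (h : (⟨Y, Z, a, c⟩ : (UPsh C).obj W) = ⟨Y, Z, b, d⟩) : a = b ∧ c = d := by
  have h' : (⟨Y, Z, a, c⟩ : Σ Y Z : C, (unop W ⟶ Y) × (Z ⟶ Y)) = ⟨Y, Z, b, d⟩ := h
  simpa using h'

lemma sq_comm {W X Y Z : C} (f : X ⟶ Y) (g : Z ⟶ Y) (a : W ⟶ Z) (b : W ⟶ X)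
    (h : a ≫ g = b ≫ f) :
    yonedaEquiv.symm (⟨Z, Y, a, g⟩ : (UtildePsh C).obj (op W)) ≫ pPsh C =
      yoneda.map b ≫ yonedaEquiv.symm (⟨Y, Z, f, g⟩ : (UPsh C).obj (op X)) := by
  apply yonedaEquiv.injective
  show (⟨Y, Z, (𝟙 W ≫ a) ≫ g, g⟩ : (UPsh C).obj (op W)) = ⟨Y, Z, (𝟙 W ≫ b) ≫ f, g⟩
  rw [Category.id_comp, Category.id_comp, h]

lemma yoneda_map_comp_symm {W W' Y Z : C} (l : W' ⟶ W) (a : W ⟶ Z) (g : Z ⟶ Y) :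
    yoneda.map l ≫ yonedaEquiv.symm (⟨Z, Y, a, g⟩ : (UtildePsh C).obj (op W)) =
      (yonedaEquiv.symm (⟨Z, Y, l ≫ a, g⟩ : (UtildePsh C).obj (op W')) :
        yoneda.obj W' ⟶ UtildePsh C) := by
  apply yonedaEquiv.injective
  show (⟨Z, Y, (𝟙 W' ≫ l) ≫ a, g⟩ : (UtildePsh C).obj (op W')) = ⟨Z, Y, 𝟙 W' ≫ l ≫ a, g⟩
  rw [Category.id_comp, Category.id_comp]

/-- Lemma 2015.07.25.l1 (pullback part): for `(f, g) ∈ U_C(X)`, `(f', g) ∈ Ũ_C(X')`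
and `u : X' ⟶ X` with `u ≫ f = f' ≫ g`, the commutative square in presheaves with
top `ṽ(f', g)`, left `Yo(u)`, right `p_C` and bottom `v(f, g)` is a pullback square
iff the square in `C` with top `f'`, left `u`, right `g`, bottom `f` is a pullback
square. -/
theorem uPsh_square_isPullback_iff {C : Type u} [SmallCategory C]
    {X X' Y Z : C} (f : X ⟶ Y) (g : Z ⟶ Y) (f' : X' ⟶ Z) (u : X' ⟶ X)
    (w : u ≫ f = f' ≫ g) :
    IsPullback (yonedaEquiv.symm (⟨Z, Y, f', g⟩ : (UtildePsh C).obj (op X')))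
        (yoneda.map u) (pPsh C)
        (yonedaEquiv.symm (⟨Y, Z, f, g⟩ : (UPsh C).obj (op X))) ↔
      IsPullback f' u g f := by
  constructor
  · intro h
    refine IsPullback.of_isLimit' ⟨w.symm⟩ (PullbackCone.IsLimit.mk w.symm
      (fun s => yoneda.preimage (h.lift (yonedaEquiv.symm ⟨Z, Y, s.fst, g⟩)
        (yoneda.map s.snd) (sq_comm f g s.fst s.snd s.condition))) ?_ ?_ ?_)
    · intro s
      have h1 := h.lift_fst (yonedaEquiv.symm (⟨Z, Y, s.fst, g⟩ : (UtildePsh C).obj (op s.pt)))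
        (yoneda.map s.snd) (sq_comm f g s.fst s.snd s.condition)
      rw [← Functor.map_preimage yoneda (h.lift _ _ _), yoneda_map_comp_symm] at h1
      exact (utilde_ext (yonedaEquiv.symm.injective h1)).1
    · intro s
      apply yoneda.map_injective
      rw [Functor.map_comp, Functor.map_preimage]
      exact h.lift_snd _ _ _
    · intro s m hm1 hm2
      apply yoneda.map_injective
      rw [Functor.map_preimage]
      apply h.hom_ext
      · rw [h.lift_fst, yoneda_map_comp_symm, hm1]
      · rw [h.lift_snd, ← Functor.map_comp, hm2]
  · intro hp
    apply IsPullback.of_isLimit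
      (c := PullbackCone.mk _ _ (sq_comm f g f' u w.symm))
    apply evaluationJointlyReflectsLimits
    intro W
    refine (isLimitMapConePullbackConeEquiv ((evaluation Cᵒᵖ (Type u)).obj W)
      (sq_comm f g f' u w.symm)).symm ((PullbackCone.isLimitEquivBijective _).symm ⟨?_, ?_⟩)
    · intro h₁ h₂ hh
      change unop W ⟶ X' at h₁ h₂
      have h3 := congrArg (fun t => t.1.1) hh
      have h4 := congrArg (fun t => t.1.2) hh
      simp only [PullbackCone.toPullbackObj, PullbackCone.mk_fst, PullbackCone.mk_snd,
        evaluation_obj_map, yonedaEquiv_symm_app_apply] at h3 h4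
      have h3' : (⟨Z, Y, h₁ ≫ f', g⟩ : (UtildePsh C).obj W) = ⟨Z, Y, h₂ ≫ f', g⟩ := by
        exact h3
      have h4' : h₁ ≫ u = h₂ ≫ u := h4
      exact hp.hom_ext (utilde_ext h3').1 h4'
    · rintro ⟨⟨s, k⟩, hsk⟩
      change unop W ⟶ X at k
      obtain ⟨Z', Y', q, g'⟩ := s
      have hsk' : (⟨Y', Z', q ≫ g', g'⟩ : (UPsh C).obj W) = ⟨Y, Z, k ≫ f, g⟩ := hsk
      have e1 : Y' = Y := congrArg (fun t => t.1) hsk'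
      subst e1
      have e2 : Z' = Z := congrArg (fun t => t.2.1) hsk'
      subst e2
      obtain ⟨e3, rfl⟩ := u_ext hsk'
      refine ⟨hp.lift q k e3, Subtype.ext (Prod.ext ?_ ?_)⟩
      · show (⟨Z', Y', hp.lift q k e3 ≫ f', g'⟩ : (UtildePsh C).obj W) = ⟨Z', Y', q, g'⟩
        rw [hp.lift_fst]
      · exact hp.lift_snd q k e3
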